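/- Let C₂ be a p × n real measurement matrix (each row contains exactly one entry equal to 1 and exactly one entry equal to −1 with all other entries 0, and C₂ has full row rank), and let F be an m × n real matrix. Then there exists an m × p real matrix K satisfying K C₂ = F if and only if F · E^{(c)} = 0 for every connected component c of the measurement graph of C₂, where E^{(c)} ∈ ℝ^n is the indicator vector whose j-th entry is 1 if vertex j lies in component c and 0 otherwise. -/

import Mathlib

open Matrix BigOperators

attribute [local instance] Classical.propDecidable

/-- `C₂` is a measurement matrix: each row contains exactly one entry equal to `1` and
exactly one entry equal to `-1`, all other entries are `0`, and `C₂` has full row rank. -/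
def IsMeasurementMatrix {p n : ℕ} (C₂ : Matrix (Fin p) (Fin n) ℝ) : Prop :=
  (∀ ℓ : Fin p, ∃ i j : Fin n, i ≠ j ∧ C₂ ℓ i = 1 ∧ C₂ ℓ j = -1 ∧
    ∀ k : Fin n, k ≠ i → k ≠ j → C₂ ℓ k = 0) ∧ C₂.rank = p

/-- The measurement graph of `C₂`: the simple graph on `{1,…,n}` with an edge between
distinct `i` and `j` exactly when some row `ℓ` has `C₂ ℓ i ≠ 0` and `C₂ ℓ j ≠ 0`. -/
def measGraph {p n : ℕ} (C₂ : Matrix (Fin p) (Fin n) ℝ) : SimpleGraph (Fin n) :=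
  SimpleGraph.fromRel (fun i j => ∃ ℓ : Fin p, C₂ ℓ i ≠ 0 ∧ C₂ ℓ j ≠ 0)

/-- The indicator vector `E^{(c)} ∈ ℝ^n` of a connected component `c` of a graph `G`. -/
noncomputable def componentIndicator {n : ℕ} (G : SimpleGraph (Fin n))
    (c : G.ConnectedComponent) : Fin n → ℝ :=
  fun j => if G.connectedComponentMk j = c then 1 else 0

section Aux

variable {p n : ℕ} (C₂ : Matrix (Fin p) (Fin n) ℝ)

/-- Each row acts on a vector as the difference of two coordinates. -/
lemma measRowSum (hC : IsMeasurementMatrix C₂) (x : Fin n → ℝ) (ℓ : Fin p) :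
    ∃ i j : Fin n, i ≠ j ∧ C₂ ℓ i = 1 ∧ C₂ ℓ j = -1 ∧
      (∀ k, k ≠ i → k ≠ j → C₂ ℓ k = 0) ∧ (C₂ *ᵥ x) ℓ = x i - x j := by
  obtain ⟨i, j, hij, h1, h2, h0⟩ := hC.1 ℓ
  refine ⟨i, j, hij, h1, h2, h0, ?_⟩
  have hdef : (C₂ *ᵥ x) ℓ = ∑ k, C₂ ℓ k * x k := rfl
  rw [hdef, ← Finset.sum_subset (Finset.subset_univ ({i, j} : Finset (Fin n)))]
  · rw [Finset.sum_pair hij, h1, h2]; ring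
  · intro k _ hk
    simp only [Finset.mem_insert, Finset.mem_singleton] at hk
    push_neg at hk
    rw [h0 k hk.1 hk.2, zero_mul]

lemma adj_eq_of_ker (hC : IsMeasurementMatrix C₂) (x : Fin n → ℝ)
    (hx : C₂ *ᵥ x = 0) {i j : Fin n} (hadj : (measGraph C₂).Adj i j) : x i = x j := by
  simp only [measGraph, SimpleGraph.fromRel_adj] at hadj
  obtain ⟨hne, hrel⟩ := hadj
  have hℓ : ∃ ℓ, C₂ ℓ i ≠ 0 ∧ C₂ ℓ j ≠ 0 := by
    rcases hrel with ⟨ℓ, h1, h2⟩ | ⟨ℓ, h1, h2⟩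
    exacts [⟨ℓ, h1, h2⟩, ⟨ℓ, h2, h1⟩]
  obtain ⟨ℓ, hi, hj⟩ := hℓ
  obtain ⟨i', j', hij', h1, h2, h0, hsum⟩ := measRowSum C₂ hC x ℓ
  rw [hx] at hsum
  have hxij : x i' = x j' := by
    have : (0 : ℝ) = x i' - x j' := hsum
    linarith
  have hmem : ∀ k, C₂ ℓ k ≠ 0 → k = i' ∨ k = j' := by
    intro k hk
    by_contra hcon
    push_neg at hcon
    exact hk (h0 k hcon.1 hcon.2)
  rcases hmem i hi with rfl | rfl <;> rcases hmem j hj with rfl | rfl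
  · exact absurd rfl hne
  · exact hxij
  · exact hxij.symm
  · exact absurd rfl hne

lemma walk_eq_of_ker (hC : IsMeasurementMatrix C₂) (x : Fin n → ℝ)
    (hx : C₂ *ᵥ x = 0) : ∀ {i j : Fin n}, (measGraph C₂).Walk i j → x i = x j
  | _, _, SimpleGraph.Walk.nil => rfl
  | _, _, SimpleGraph.Walk.cons h w =>
      (adj_eq_of_ker C₂ hC x hx h).trans (walk_eq_of_ker hC x hx w)

lemma const_of_ker (hC : IsMeasurementMatrix C₂) (x : Fin n → ℝ)
    (hx : C₂ *ᵥ x = 0) {i j : Fin n}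
    (h : (measGraph C₂).connectedComponentMk i = (measGraph C₂).connectedComponentMk j) :
    x i = x j := by
  obtain ⟨w⟩ := (SimpleGraph.ConnectedComponent.eq).mp h
  exact walk_eq_of_ker C₂ hC x hx w

lemma mulVec_indicator (hC : IsMeasurementMatrix C₂) (c : (measGraph C₂).ConnectedComponent) :
    C₂ *ᵥ componentIndicator (measGraph C₂) c = 0 := by
  funext ℓ
  obtain ⟨i, j, hij, h1, h2, h0, hsum⟩ :=
    measRowSum C₂ hC (componentIndicator (measGraph C₂) c) ℓ
  have hadj : (measGraph C₂).Adj i j := by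
    simp only [measGraph, SimpleGraph.fromRel_adj]
    exact ⟨hij, Or.inl ⟨ℓ, by rw [h1]; norm_num, by rw [h2]; norm_num⟩⟩
  have hmk : (measGraph C₂).connectedComponentMk i = (measGraph C₂).connectedComponentMk j :=
    SimpleGraph.ConnectedComponent.sound hadj.reachable
  simp only [Pi.zero_apply, hsum, componentIndicator, hmk, sub_self]

end Aux

/-- For a measurement matrix `C₂` and an `m × n` matrix `F`, there exists
`K` with `K C₂ = F` iff `F · E^{(c)} = 0` for every connected component `c` of the
measurement graph of `C₂`. -/
theorem exists_factor_through_measurement_iff_components (m p n : ℕ)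
    (C₂ : Matrix (Fin p) (Fin n) ℝ) (hC : IsMeasurementMatrix C₂)
    (F : Matrix (Fin m) (Fin n) ℝ) :
    (∃ K : Matrix (Fin m) (Fin p) ℝ, K * C₂ = F) ↔
    ∀ c : (measGraph C₂).ConnectedComponent,
      F.mulVec (componentIndicator (measGraph C₂) c) = 0 := by
  constructor
  · rintro ⟨K, rfl⟩ c
    rw [← Matrix.mulVec_mulVec, mulVec_indicator C₂ hC c, Matrix.mulVec_zero]
  · intro h
    have key : ∀ i : Fin m, ∃ k : Fin p → ℝ, k ᵥ* C₂ = F i := by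
      intro i
      let T : EuclideanSpace ℝ (Fin p) →ₗ[ℝ] EuclideanSpace ℝ (Fin n) :=
        { toFun := fun k => WithLp.toLp 2 (k.ofLp ᵥ* C₂ : Fin n → ℝ)
          map_add' := fun a b => by ext; simp [Matrix.add_vecMul]
          map_smul' := fun r a => by ext; simp [Matrix.smul_vecMul] }
      let W : Submodule ℝ (EuclideanSpace ℝ (Fin n)) := LinearMap.range T
      have horth : ∀ y : EuclideanSpace ℝ (Fin n), y ∈ Wᗮ → C₂ *ᵥ (y : Fin n → ℝ) = 0 := by
        intro y hy
        have h1 : inner ℝ (T (WithLp.toLp 2 (C₂ *ᵥ (y : Fin n → ℝ)))) y = (0 : ℝ) :=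
          (Submodule.mem_orthogonal W y).mp hy (T (WithLp.toLp 2 (C₂ *ᵥ (y : Fin n → ℝ)))) ⟨_, rfl⟩
        have h2 : ((C₂ *ᵥ (y : Fin n → ℝ)) ᵥ* C₂) ⬝ᵥ (y : Fin n → ℝ) = 0 := by
          simpa [T, PiLp.inner_apply, RCLike.inner_apply, dotProduct, mul_comm] using h1
        rw [← Matrix.dotProduct_mulVec] at h2
        exact dotProduct_self_eq_zero.mp h2
      have hf : (WithLp.equiv 2 (Fin n → ℝ)).symm (F i) ∈ Wᗮᗮ := by
        rw [Submodule.mem_orthogonal]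
        intro y hy
        have hker := horth y hy
        have hdot : (y : Fin n → ℝ) ⬝ᵥ F i = 0 := by
          have hfib := Finset.sum_fiberwise Finset.univ
            (fun j => (measGraph C₂).connectedComponentMk j) (fun j => y j * F i j)
          have hcomp : ∀ c : (measGraph C₂).ConnectedComponent,
              ∑ j ∈ Finset.filter
                (fun j => (measGraph C₂).connectedComponentMk j = c) Finset.univ,
                y j * F i j = 0 := by
            intro c
            have hc0 : ∑ j ∈ Finset.filter
                (fun j => (measGraph C₂).connectedComponentMk j = c) Finset.univ,
                F i j = 0 := by
              have := congrFun (h c) i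
              simpa [Matrix.mulVec, dotProduct, componentIndicator, mul_ite,
                Finset.sum_filter] using this
            calc ∑ j ∈ Finset.filter
                  (fun j => (measGraph C₂).connectedComponentMk j = c) Finset.univ,
                  y j * F i j
                = ∑ j ∈ Finset.filter
                  (fun j => (measGraph C₂).connectedComponentMk j = c) Finset.univ,
                  y c.out * F i j := by
                  refine Finset.sum_congr rfl fun j hj => ?_
                  have hjc : (measGraph C₂).connectedComponentMk j = c :=
                    (Finset.mem_filter.mp hj).2
                  rw [const_of_ker C₂ hC y hker (hjc.trans c.out_eq.symm)]
              _ = y c.out * ∑ j ∈ Finset.filter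
                  (fun j => (measGraph C₂).connectedComponentMk j = c) Finset.univ,
                  F i j := by rw [Finset.mul_sum]
              _ = 0 := by rw [hc0, mul_zero]
          have : (y : Fin n → ℝ) ⬝ᵥ F i = ∑ c : (measGraph C₂).ConnectedComponent,
              ∑ j ∈ Finset.filter
                (fun j => (measGraph C₂).connectedComponentMk j = c) Finset.univ,
                y j * F i j := by
            rw [hfib]; rfl
          rw [this, Finset.sum_congr rfl fun c _ => hcomp c, Finset.sum_const_zero]
        simpa [PiLp.inner_apply, RCLike.inner_apply, dotProduct, mul_comm] using hdot
      rw [Submodule.orthogonal_orthogonal] at hf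
      obtain ⟨k, hk⟩ := hf
      exact ⟨k.ofLp, congrArg WithLp.ofLp hk⟩
    choose K hK using key
    refine ⟨Matrix.of K, ?_⟩
    ext i j
    have := congrFun (hK i) j
    simpa [Matrix.mul_apply, Matrix.vecMul, dotProduct] using this
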